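/- The ~-closure of a prefix-closed language need not be prefix-closed: there is a language L (e.g. the prefix closure of {x₁/(y₁,y₂) x₁/(y₁,-)}) such that its closure under ~ contains a trace some of whose prefixes are not in the closure. -/
import Mathlib


/-- Events for the example: `x₁`, `y₁` at port 1 and `y₂` at port 2. -/
inductive Ev where
  | x1 | y1 | y2
deriving DecidableEq

/-- The port of each event. -/
def Ev.port : Ev → Fin 2
  | .x1 => 0
  | .y1 => 0
  | .y2 => 1

def proj (p : Fin 2) (σ : List Ev) : List Ev :=
  σ.filter (fun a => a.port = p)

def traceEquiv (σ σ' : List Ev) : Prop :=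
  ∀ p : Fin 2, proj p σ = proj p σ'

/-- `L`: the (transition-level) prefix closure of the single global trace
`x₁/(y₁,y₂) x₁/(y₁,-)`, written as event sequences. -/
def L : Set (List Ev) :=
  {[], [Ev.x1, Ev.y1, Ev.y2], [Ev.x1, Ev.y1, Ev.y2, Ev.x1, Ev.y1]}

/-- The `~`-closure of `L`. -/
def closL : Set (List Ev) := {σ | ∃ σ' ∈ L, traceEquiv σ σ'}

/-- the `~`-closure of the prefix-closed language `L` is not prefix
closed: it contains the trace `x₁/(y₁,-) x₁/(y₁,y₂)` whose prefix `x₁/(y₁,-)` is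
not in the closure. -/
theorem closure_not_prefix_closed :
    [Ev.x1, Ev.y1, Ev.x1, Ev.y1, Ev.y2] ∈ closL ∧
    [Ev.x1, Ev.y1] <+: [Ev.x1, Ev.y1, Ev.x1, Ev.y1, Ev.y2] ∧
    [Ev.x1, Ev.y1] ∉ closL := by
  refine ⟨⟨[Ev.x1, Ev.y1, Ev.y2, Ev.x1, Ev.y1], Or.inr (Or.inr rfl), ?_⟩,
    ⟨[Ev.x1, Ev.y1, Ev.y2], rfl⟩, ?_⟩
  · intro p; fin_cases p <;> decide
  · rintro ⟨σ', hσ', h⟩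
    rcases hσ' with rfl | rfl | rfl
    · exact absurd (h 0) (by decide)
    · exact absurd (h 1) (by decide)
    · exact absurd (h 1) (by decide)
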